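/- arXiv:1510.04674 — 2 statements merged into one kernel-verified Lean document; each statement's English description precedes it below -/
import Mathlib

section
/- Suppose a nonnegative random variable X satisfies, for constants A > 2, m > 0, t > 0, the moment bounds A^{−k} m^k e^{k³ t / A} ≤ E[X^k] ≤ A^k m^k e^{A k³ t} for all k ≥ 2. Then for every k ≥ 2, P{ X ≥ (1/2) A^{−1} m e^{k² t / A} } ≥ (1/4) exp( −8 A k³ t − 4 k log A ). -/
open MeasureTheory Real

set_option maxHeartbeats 1000000 in
theorem stmt7 {Ω : Type*} [MeasurableSpace Ω] (μ : Measure Ω) [IsProbabilityMeasure μ]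
    (X : Ω → ℝ) (hX : ∀ ω, 0 ≤ X ω) (A m t : ℝ) (hA : 2 < A) (hm : 0 < m) (ht : 0 < t)
    (hint : ∀ k : ℝ, 2 ≤ k → Integrable (fun ω => X ω ^ k) μ)
    (hmom : ∀ k : ℝ, 2 ≤ k →
      A ^ (-k) * m ^ k * Real.exp (k ^ 3 * t / A) ≤ ∫ ω, X ω ^ k ∂μ ∧
      (∫ ω, X ω ^ k ∂μ) ≤ A ^ k * m ^ k * Real.exp (A * k ^ 3 * t)) :
    ∀ k : ℝ, 2 ≤ k →
      (1/4) * Real.exp (-8 * A * k ^ 3 * t - 4 * k * Real.log A)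
        ≤ (μ {ω | (1/2) * A⁻¹ * m * Real.exp (k ^ 2 * t / A) ≤ X ω}).toReal := by
  intro k hk
  have hA0 : (0:ℝ) < A := by linarith
  have hk0 : (0:ℝ) < k := by linarith
  set θ : ℝ := A⁻¹ * m * Real.exp (k ^ 2 * t / A) with hθdef
  have hθ0 : 0 < θ := by positivity
  set c : ℝ := ∫ ω, X ω ^ k ∂μ with hcdef
  set c2 : ℝ := ∫ ω, X ω ^ (2*k) ∂μ with hc2def
  set L : ℝ := A ^ (-k) * m ^ k * Real.exp (k ^ 3 * t / A) with hLdef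
  set U : ℝ := A ^ (2*k) * m ^ (2*k) * Real.exp (A * (2*k) ^ 3 * t) with hUdef
  have hL0 : 0 < L := by positivity
  have hU0 : 0 < U := by positivity
  have h2k : (2:ℝ) ≤ 2*k := by linarith
  have hcL : L ≤ c := (hmom k hk).1
  have hc2U : c2 ≤ U := (hmom (2*k) h2k).2
  have hc0 : 0 < c := lt_of_lt_of_le hL0 hcL
  have hc2pos : 0 < c2 :=
    lt_of_lt_of_le (by positivity) (hmom (2*k) h2k).1
  -- θ ^ k = L
  have hθk : θ ^ k = L := by
    rw [hθdef, hLdef, Real.mul_rpow (by positivity) (Real.exp_pos _).le,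
      Real.mul_rpow (by positivity) hm.le, Real.inv_rpow hA0.le,
      ← Real.rpow_neg hA0.le, ← Real.exp_mul]
    congr 1
    ring
  -- the measurable representative
  obtain ⟨g, hgm, hg⟩ := (hint k hk).aestronglyMeasurable
  have hgc : ∫ ω, g ω ∂μ = c := integral_congr_ae hg.symm
  have hgint : Integrable g μ := (hint k hk).congr hg
  have hsq : (fun ω => X ω ^ (2*k)) =ᵐ[μ] fun ω => g ω ^ (2:ℕ) := by
    filter_upwards [hg] with ω hω
    rw [← hω, ← Real.rpow_natCast (X ω ^ k) 2, ← Real.rpow_mul (hX ω)]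
    norm_num
    ring_nf
  have hg2int : Integrable (fun ω => g ω ^ (2:ℕ)) μ := (hint (2*k) h2k).congr hsq
  have hgc2 : ∫ ω, g ω ^ (2:ℕ) ∂μ = c2 := integral_congr_ae hsq.symm
  have hgnn : 0 ≤ᵐ[μ] g := by
    filter_upwards [hg] with ω hω
    rw [← hω]
    exact Real.rpow_nonneg (hX ω) k
  set s : ℝ := (θ/2) ^ k with hsdef
  set S : Set Ω := {ω | s ≤ g ω} with hSdef
  have hSmeas : MeasurableSet S :=
    measurableSet_le measurable_const hgm.measurable
  -- the target measure equals μ S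
  have hμeq : μ {ω | (1/2) * A⁻¹ * m * Real.exp (k ^ 2 * t / A) ≤ X ω} = μ S := by
    have h1 : {ω | (1/2) * A⁻¹ * m * Real.exp (k ^ 2 * t / A) ≤ X ω}
        = {ω | s ≤ X ω ^ k} := by
      ext ω
      simp only [Set.mem_setOf_eq, hsdef]
      rw [Real.rpow_le_rpow_iff (by positivity) (hX ω) hk0, hθdef]
      constructor <;> intro h <;> linarith
    rw [h1]
    refine measure_congr ?_
    rw [Filter.eventuallyEq_set]
    filter_upwards [hg] with ω hω
    simp [hSdef, hω]
  -- s ≤ c / 4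
  have hs4 : s ≤ c / 4 := by
    have h2k4 : (4:ℝ) ≤ (2:ℝ) ^ k := by
      have h := (Real.rpow_le_rpow_left_iff (x := (2:ℝ)) (by norm_num)).2 hk
      rw [show ((2:ℝ):ℝ) = ((2:ℕ):ℝ) by norm_num, Real.rpow_natCast] at h
      norm_num at h
      linarith
    have hseq : s = θ ^ k / (2:ℝ) ^ k := by
      rw [hsdef, Real.div_rpow hθ0.le (by norm_num)]
    rw [hseq, hθk]
    rw [div_le_div_iff₀ (by positivity) (by norm_num)]
    nlinarith
  -- split the integral
  have hsplit : c = (∫ ω in S, g ω ∂μ) + ∫ ω in Sᶜ, g ω ∂μ := by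
    rw [← hgc, ← integral_add_compl hSmeas hgint]
  have hcompl : ∫ ω in Sᶜ, g ω ∂μ ≤ c / 4 := by
    have h1 : ∫ ω in Sᶜ, g ω ∂μ ≤ ∫ _ω in Sᶜ, s ∂μ := by
      refine setIntegral_mono_on (hgint.integrableOn) (integrable_const _)
        hSmeas.compl ?_
      intro ω hω
      simp only [hSdef, Set.mem_compl_iff, Set.mem_setOf_eq, not_le] at hω
      exact hω.le
    have h2 : ∫ _ω in Sᶜ, s ∂μ ≤ s := by
      rw [setIntegral_const, smul_eq_mul]
      have hs0 : 0 < s := by rw [hsdef]; positivity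
      have hμc : (μ Sᶜ).toReal ≤ 1 :=
        (ENNReal.toReal_mono ENNReal.one_ne_top prob_le_one).trans (by norm_num)
      have hμc' : μ.real Sᶜ ≤ 1 := hμc
      nlinarith
    linarith [h1.trans h2]
  set p : ℝ := (μ S).toReal with hpdef
  have hp0 : 0 ≤ p := ENNReal.toReal_nonneg
  -- Cauchy–Schwarz step
  have hCS : ∫ ω in S, g ω ∂μ ≤ Real.sqrt c2 * Real.sqrt p := by
    have hindnn : 0 ≤ᵐ[μ] S.indicator (fun _ => (1:ℝ)) :=
      Filter.Eventually.of_forall fun ω => Set.indicator_nonneg (fun _ _ => zero_le_one) ω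
    have hmem1 : MemLp g (ENNReal.ofReal 2) μ := by
      rw [show ENNReal.ofReal 2 = 2 by norm_num [ENNReal.ofReal_ofNat]]
      exact (memLp_two_iff_integrable_sq hgm.aestronglyMeasurable).2 hg2int
    have hmem2 : MemLp (S.indicator (fun _ => (1:ℝ))) (ENNReal.ofReal 2) μ :=
      memLp_indicator_const _ hSmeas 1 (Or.inr (measure_ne_top μ S))
    have hconj : Real.HolderConjugate 2 2 :=
      (Real.holderConjugate_iff_eq_conjExponent (by norm_num)).2 (by norm_num)
    have hH := integral_mul_le_Lp_mul_Lq_of_nonneg hconj hgnn hindnn hmem1 hmem2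
    have hleft : ∫ ω in S, g ω ∂μ = ∫ ω, g ω * S.indicator (fun _ => (1:ℝ)) ω ∂μ := by
      rw [← integral_indicator hSmeas]
      refine integral_congr_ae (Filter.Eventually.of_forall fun ω => ?_)
      by_cases h : ω ∈ S <;> simp [h]
    have hr1 : ∫ ω, g ω ^ (2:ℝ) ∂μ = c2 := by
      rw [← hgc2]
      refine integral_congr_ae (Filter.Eventually.of_forall fun ω => ?_)
      simpa using Real.rpow_natCast (g ω) 2
    have hr2 : ∫ ω, (S.indicator (fun _ => (1:ℝ)) ω) ^ (2:ℝ) ∂μ = p := by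
      have h : ∀ ω, (S.indicator (fun _ => (1:ℝ)) ω) ^ (2:ℝ)
          = S.indicator (fun _ => (1:ℝ)) ω := fun ω => by
        by_cases h : ω ∈ S <;> simp [h, Real.rpow_natCast]
      simp_rw [h]
      rw [integral_indicator hSmeas]
      simp [hpdef, Measure.real]
    rw [hr1, hr2] at hH
    rw [hleft, Real.sqrt_eq_rpow, Real.sqrt_eq_rpow]
    exact hH
  -- conclude (3/4) c ≤ sqrt c2 * sqrt p and square
  have h34 : (3/4) * c ≤ Real.sqrt c2 * Real.sqrt p := by
    nlinarith [hcompl, hCS, hsplit]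
  have hsq2 : (3/4 * c) ^ 2 ≤ c2 * p := by
    have h1 : (Real.sqrt c2 * Real.sqrt p) ^ 2 = c2 * p := by
      rw [mul_pow, Real.sq_sqrt hc2pos.le, Real.sq_sqrt hp0]
    nlinarith [Real.sqrt_nonneg c2, Real.sqrt_nonneg p, h34]
  -- numeric conclusion
  have hLe : L = Real.exp (Real.log A * (-k) + (Real.log m * k + k ^ 3 * t / A)) := by
    rw [hLdef, Real.rpow_def_of_pos hA0, Real.rpow_def_of_pos hm,
      Real.exp_add, Real.exp_add]
    ring
  have hUe : U = Real.exp (Real.log A * (2*k) + (Real.log m * (2*k) + A * (2*k) ^ 3 * t)) := by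
    rw [hUdef, Real.rpow_def_of_pos hA0, Real.rpow_def_of_pos hm,
      Real.exp_add, Real.exp_add]
    ring
  have hEU : Real.exp (-8 * A * k ^ 3 * t - 4 * k * Real.log A) * U ≤ L ^ 2 := by
    rw [hLe, hUe, ← Real.exp_add, sq, ← Real.exp_add]
    refine Real.exp_le_exp.2 ?_
    have hpos : 0 ≤ k ^ 3 * t / A := by positivity
    nlinarith
  have hE0 : 0 < Real.exp (-8 * A * k ^ 3 * t - 4 * k * Real.log A) := Real.exp_pos _
  have hkey : Real.exp (-8 * A * k ^ 3 * t - 4 * k * Real.log A) * c2 ≤ L ^ 2 :=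
    le_trans (mul_le_mul_of_nonneg_left hc2U hE0.le) hEU
  have hL2c2 : L ^ 2 ≤ c ^ 2 := by nlinarith
  rw [hμeq, ← hpdef]
  nlinarith [hsq2, hkey, hL2c2, hc2pos, hE0, hp0, mul_pos hc2pos hE0]
end

section
/- Let J_t(x) := (p_t * f)(x) where f ∈ L^∞(ℝ) vanishes a.e. on [a − r, a + r], with B := ‖f‖_{L^∞(ℝ)}. Then for all 0 < s < t and all x with |x − a| ≤ r/4, (J_{t−s}² * p_{s/2})(x) ≤ 4B² e^{−r²/(4t)} + 2B² e^{−r²/(16s)} ≤ 6 B² e^{−r²/(16t)}. -/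
open MeasureTheory Real

noncomputable def heatKernel (t x : ℝ) : ℝ :=
  (2 * Real.pi * t) ^ (-(1:ℝ)/2) * Real.exp (-x ^ 2 / (2 * t))

lemma hk_const_pos {u : ℝ} (hu : 0 < u) : (0:ℝ) < (2 * Real.pi * u) ^ (-(1:ℝ)/2) :=
  Real.rpow_pos_of_pos (by positivity) _

lemma hk_nonneg {u : ℝ} (hu : 0 < u) (y : ℝ) : 0 ≤ heatKernel u y :=
  le_of_lt (mul_pos (hk_const_pos hu) (Real.exp_pos _))

lemma hk_eq (u y : ℝ) :
    heatKernel u y = (2 * Real.pi * u) ^ (-(1:ℝ)/2) * Real.exp (-(1/(2*u)) * y ^ 2) := by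
  rw [heatKernel]
  congr 1
  ring_nf

lemma hk_integrable {u : ℝ} (hu : 0 < u) : Integrable (heatKernel u) := by
  have h := (integrable_exp_neg_mul_sq (show (0:ℝ) < 1/(2*u) by positivity)).const_mul
    ((2 * Real.pi * u) ^ (-(1:ℝ)/2))
  have he : heatKernel u = fun y =>
      (2 * Real.pi * u) ^ (-(1:ℝ)/2) * Real.exp (-(1/(2*u)) * y ^ 2) := funext (hk_eq u)
  rw [he]; exact h

lemma hk_integral {u : ℝ} (hu : 0 < u) : ∫ y, heatKernel u y = 1 := by
  have he : heatKernel u = fun y =>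
      (2 * Real.pi * u) ^ (-(1:ℝ)/2) * Real.exp (-(1/(2*u)) * y ^ 2) := funext (hk_eq u)
  rw [he, MeasureTheory.integral_const_mul, integral_gaussian]
  have h1 : Real.pi / (1/(2*u)) = 2 * Real.pi * u := by field_simp
  rw [h1, Real.sqrt_eq_rpow, ← Real.rpow_add (by positivity : (0:ℝ) < 2 * Real.pi * u)]
  norm_num

lemma hk_even (u y : ℝ) : heatKernel u (-y) = heatKernel u y := by
  rw [heatKernel, heatKernel, neg_pow]
  norm_num

lemma hk_comp_integrable {u : ℝ} (hu : 0 < u) (b : ℝ) :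
    Integrable (fun z => heatKernel u (b - z)) := by
  have he : (fun z => heatKernel u (b - z)) = fun z => heatKernel u (z - b) := by
    funext z
    rw [← hk_even u (z - b)]
    congr 1; ring
  rw [he]
  exact (hk_integrable hu).comp_sub_right b

lemma hk_comp_integral {u : ℝ} (hu : 0 < u) (b : ℝ) :
    ∫ z, heatKernel u (b - z) = 1 := by
  have he : (fun z => heatKernel u (b - z)) = fun z => heatKernel u (z - b) := by
    funext z
    rw [← hk_even u (z - b)]
    congr 1; ring
  rw [he, MeasureTheory.integral_sub_right_eq_self (heatKernel u) b, hk_integral hu]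

lemma hk_shift_right {u c y : ℝ} (hu : 0 < u) (hc : 0 ≤ c) (hy : c ≤ y) :
    heatKernel u y ≤ Real.exp (-c ^ 2 / (2 * u)) * heatKernel u (y - c) := by
  have hC := (hk_const_pos hu).le
  have hexp : Real.exp (-y ^ 2 / (2 * u)) ≤
      Real.exp (-(y - c) ^ 2 / (2 * u)) * Real.exp (-c ^ 2 / (2 * u)) := by
    rw [← Real.exp_add]
    apply Real.exp_le_exp.mpr
    have h2u : (0:ℝ) < 2 * u := by linarith
    rw [← add_div, div_le_div_iff_of_pos_right h2u]
    nlinarith [mul_nonneg hc (sub_nonneg.mpr hy)]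
  calc heatKernel u y
      = (2 * Real.pi * u) ^ (-(1:ℝ)/2) * Real.exp (-y ^ 2 / (2 * u)) := rfl
    _ ≤ (2 * Real.pi * u) ^ (-(1:ℝ)/2) *
        (Real.exp (-(y - c) ^ 2 / (2 * u)) * Real.exp (-c ^ 2 / (2 * u))) :=
        mul_le_mul_of_nonneg_left hexp hC
    _ = Real.exp (-c ^ 2 / (2 * u)) * heatKernel u (y - c) := by
        rw [heatKernel]; ring

lemma hk_shift {u c y : ℝ} (hu : 0 < u) (hc : 0 ≤ c) (hy : c ≤ |y|) :
    heatKernel u y ≤ Real.exp (-c ^ 2 / (2 * u)) *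
      (heatKernel u (y - c) + heatKernel u (y + c)) := by
  have hpos1 : 0 ≤ Real.exp (-c ^ 2 / (2 * u)) * heatKernel u (y - c) :=
    mul_nonneg (Real.exp_pos _).le (hk_nonneg hu _)
  have hpos2 : 0 ≤ Real.exp (-c ^ 2 / (2 * u)) * heatKernel u (y + c) :=
    mul_nonneg (Real.exp_pos _).le (hk_nonneg hu _)
  rw [mul_add]
  rcases le_abs.mp hy with h | h
  · have := hk_shift_right hu hc h
    linarith
  · have h' : c ≤ -y := h
    have := hk_shift_right hu hc h'
    rw [hk_even] at this
    have he : heatKernel u (-y - c) = heatKernel u (y + c) := by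
      rw [← hk_even u (y + c)]
      congr 1; ring
    rw [he] at this
    linarith

lemma J_bound {u B : ℝ} (hu : 0 < u) (hB0 : 0 ≤ B) {f : ℝ → ℝ}
    (hbd : ∀ᵐ z : ℝ, |f z| ≤ B) (w : ℝ) :
    |∫ z, heatKernel u (w - z) * f z| ≤ B := by
  have hint : Integrable (fun z => B * heatKernel u (w - z)) :=
    (hk_comp_integrable hu w).const_mul B
  have hae : ∀ᵐ z : ℝ, ‖heatKernel u (w - z) * f z‖ ≤ B * heatKernel u (w - z) := by
    filter_upwards [hbd] with z hz
    rw [norm_mul, Real.norm_eq_abs, Real.norm_eq_abs, abs_of_nonneg (hk_nonneg hu _)]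
    calc heatKernel u (w - z) * |f z| ≤ heatKernel u (w - z) * B :=
          mul_le_mul_of_nonneg_left hz (hk_nonneg hu _)
      _ = B * heatKernel u (w - z) := by ring
  have key := MeasureTheory.norm_integral_le_of_norm_le hint hae
  rw [Real.norm_eq_abs] at key
  calc |∫ z, heatKernel u (w - z) * f z| ≤ ∫ z, B * heatKernel u (w - z) := key
    _ = B * ∫ z, heatKernel u (w - z) := MeasureTheory.integral_const_mul _ _
    _ = B := by rw [hk_comp_integral hu w, mul_one]

lemma J_small {u B a r : ℝ} (hu : 0 < u) (hr : 0 < r) (hB0 : 0 ≤ B) {f : ℝ → ℝ}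
    (hbd : ∀ᵐ z : ℝ, |f z| ≤ B)
    (hvan : ∀ᵐ z : ℝ, z ∈ Set.Icc (a - r) (a + r) → f z = 0)
    {w : ℝ} (hw : |w - a| ≤ r / 2) :
    |∫ z, heatKernel u (w - z) * f z| ≤ 2 * B * Real.exp (-r ^ 2 / (8 * u)) := by
  set E := Real.exp (-r ^ 2 / (8 * u)) with hE
  have hEpos : 0 < E := Real.exp_pos _
  have hint : Integrable (fun z => B * E *
      (heatKernel u (w - r/2 - z) + heatKernel u (w + r/2 - z))) :=
    ((hk_comp_integrable hu (w - r/2)).add (hk_comp_integrable hu (w + r/2))).const_mul (B * E)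
  have hae : ∀ᵐ z : ℝ, ‖heatKernel u (w - z) * f z‖ ≤ B * E *
      (heatKernel u (w - r/2 - z) + heatKernel u (w + r/2 - z)) := by
    filter_upwards [hbd, hvan] with z hz hv
    by_cases hmem : z ∈ Set.Icc (a - r) (a + r)
    · rw [hv hmem, mul_zero, norm_zero]
      exact mul_nonneg (mul_nonneg hB0 hEpos.le)
        (add_nonneg (hk_nonneg hu _) (hk_nonneg hu _))
    · have hza : r < |z - a| := by
        by_contra hcon
        push_neg at hcon
        rcases abs_le.mp hcon with ⟨h1, h2⟩
        exact hmem ⟨by linarith, by linarith⟩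
      have tri : |z - a| ≤ |z - w| + |w - a| := abs_sub_le z w a
      have hwz : r / 2 ≤ |w - z| := by rw [abs_sub_comm]; linarith
      have hshift := hk_shift hu (by linarith : (0:ℝ) ≤ r/2) hwz
      have e1 : w - z - r/2 = w - r/2 - z := by ring
      have e2 : w - z + r/2 = w + r/2 - z := by ring
      have e3 : -(r/2) ^ 2 / (2*u) = -r ^ 2 / (8*u) := by ring
      rw [e1, e2, e3] at hshift
      calc ‖heatKernel u (w - z) * f z‖ = heatKernel u (w - z) * |f z| := by
            rw [norm_mul, Real.norm_eq_abs, Real.norm_eq_abs,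
              abs_of_nonneg (hk_nonneg hu _)]
        _ ≤ heatKernel u (w - z) * B := mul_le_mul_of_nonneg_left hz (hk_nonneg hu _)
        _ ≤ (E * (heatKernel u (w - r/2 - z) + heatKernel u (w + r/2 - z))) * B :=
            mul_le_mul_of_nonneg_right hshift hB0
        _ = B * E * (heatKernel u (w - r/2 - z) + heatKernel u (w + r/2 - z)) := by ring
  have key := MeasureTheory.norm_integral_le_of_norm_le hint hae
  rw [Real.norm_eq_abs] at key
  calc |∫ z, heatKernel u (w - z) * f z|
      ≤ ∫ z, B * E * (heatKernel u (w - r/2 - z) + heatKernel u (w + r/2 - z)) := key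
    _ = B * E * ∫ z, heatKernel u (w - r/2 - z) + heatKernel u (w + r/2 - z) :=
        MeasureTheory.integral_const_mul _ _
    _ = B * E * (1 + 1) := by
        rw [MeasureTheory.integral_add (hk_comp_integrable hu (w - r/2))
          (hk_comp_integrable hu (w + r/2)), hk_comp_integral hu, hk_comp_integral hu]
    _ = 2 * B * E := by ring

lemma exp_div_mono {A u v : ℝ} (hA : 0 ≤ A) (hu : 0 < u) (huv : u ≤ v) :
    Real.exp (-A / u) ≤ Real.exp (-A / v) := by
  apply Real.exp_le_exp.mpr
  rw [neg_div, neg_div, neg_le_neg_iff]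
  gcongr

theorem stmt16 (a r : ℝ) (hr : 0 < r) (f : ℝ → ℝ) (B : ℝ) (hB0 : 0 ≤ B)
    (hbd : ∀ᵐ y : ℝ, |f y| ≤ B)
    (hvan : ∀ᵐ y : ℝ, y ∈ Set.Icc (a - r) (a + r) → f y = 0)
    (s t : ℝ) (hs : 0 < s) (hst : s < t) (x : ℝ) (hx : |x - a| ≤ r / 4) :
    (∫ y : ℝ, (∫ z : ℝ, heatKernel (t - s) (x - y - z) * f z) ^ 2 * heatKernel (s / 2) y)
        ≤ 4 * B ^ 2 * Real.exp (-r ^ 2 / (4 * t)) + 2 * B ^ 2 * Real.exp (-r ^ 2 / (16 * s)) ∧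
      4 * B ^ 2 * Real.exp (-r ^ 2 / (4 * t)) + 2 * B ^ 2 * Real.exp (-r ^ 2 / (16 * s))
        ≤ 6 * B ^ 2 * Real.exp (-r ^ 2 / (16 * t)) := by
  have ht : 0 < t := lt_trans hs hst
  have hu : 0 < t - s := by linarith
  have hs2 : 0 < s / 2 := by linarith
  set E1 := Real.exp (-r ^ 2 / (4 * t)) with hE1
  set E2 := Real.exp (-r ^ 2 / (16 * s)) with hE2
  have hE1pos : 0 < E1 := Real.exp_pos _
  have hE2pos : 0 < E2 := Real.exp_pos _
  constructor
  · -- main bound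
    have hint : Integrable (fun y => 4 * B ^ 2 * E1 * heatKernel (s/2) y
        + B ^ 2 * E2 * (heatKernel (s/2) (y - r/4) + heatKernel (s/2) (y + r/4))) := by
      refine ((hk_integrable hs2).const_mul _).add ?_
      refine Integrable.const_mul ?_ _
      refine ((hk_integrable hs2).comp_sub_right (r/4)).add ?_
      have h2 := (hk_integrable hs2).comp_sub_right (-(r/4))
      simpa [sub_neg_eq_add] using h2
    have hnonneg : ∀ y : ℝ,
        0 ≤ (∫ z : ℝ, heatKernel (t - s) (x - y - z) * f z) ^ 2 * heatKernel (s/2) y :=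
      fun y => mul_nonneg (sq_nonneg _) (hk_nonneg hs2 y)
    have hptwise : ∀ y : ℝ,
        (∫ z : ℝ, heatKernel (t - s) (x - y - z) * f z) ^ 2 * heatKernel (s/2) y
        ≤ 4 * B ^ 2 * E1 * heatKernel (s/2) y
          + B ^ 2 * E2 * (heatKernel (s/2) (y - r/4) + heatKernel (s/2) (y + r/4)) := by
      intro y
      set J := ∫ z : ℝ, heatKernel (t - s) (x - y - z) * f z with hJ
      have hp0 : 0 ≤ heatKernel (s/2) y := hk_nonneg hs2 y
      have hp1 : 0 ≤ heatKernel (s/2) (y - r/4) := hk_nonneg hs2 _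
      have hp2 : 0 ≤ heatKernel (s/2) (y + r/4) := hk_nonneg hs2 _
      by_cases hy : |y| ≤ r / 4
      · -- near: use J_small
        have hwa : |x - y - a| ≤ r / 2 := by
          have habs : |x - y - a| ≤ |x - a| + |y| := by
            have h := abs_add_le (x - a) (-y)
            rw [abs_neg] at h
            calc |x - y - a| = |(x - a) + -y| := by congr 1; ring
              _ ≤ |x - a| + |y| := h
          linarith
        have hsmall := J_small hu hr hB0 hbd hvan hwa
        rw [← hJ] at hsmall
        have hJ2 : J ^ 2 ≤ 4 * B ^ 2 * E1 := by
          have hb : 0 ≤ 2 * B * Real.exp (-r ^ 2 / (8 * (t - s))) := by positivity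
          have h2 : J ^ 2 ≤ (2 * B * Real.exp (-r ^ 2 / (8 * (t - s)))) ^ 2 := by
            rcases abs_le.mp hsmall with ⟨hl, hr'⟩
            nlinarith
          have hsq : (2 * B * Real.exp (-r ^ 2 / (8 * (t - s)))) ^ 2
              = 4 * B ^ 2 * Real.exp (-r ^ 2 / (4 * (t - s))) := by
            rw [mul_pow, mul_pow, sq (Real.exp _), ← Real.exp_add]
            have : -r ^ 2 / (8 * (t - s)) + -r ^ 2 / (8 * (t - s))
                = -r ^ 2 / (4 * (t - s)) := by
              field_simp
              ring
            rw [this]; ring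
          have hmon : Real.exp (-r ^ 2 / (4 * (t - s))) ≤ E1 := by
            rw [hE1]
            have e4 : -r ^ 2 / (4 * (t - s)) = -(r ^ 2) / (4 * (t - s)) := by ring
            have e5 : -r ^ 2 / (4 * t) = -(r ^ 2) / (4 * t) := by ring
            rw [e4, e5]
            exact exp_div_mono (sq_nonneg r) (by linarith) (by linarith)
          calc J ^ 2 ≤ 4 * B ^ 2 * Real.exp (-r ^ 2 / (4 * (t - s))) := by
                rw [← hsq]; exact h2
            _ ≤ 4 * B ^ 2 * E1 := by nlinarith
        have h1 : J ^ 2 * heatKernel (s/2) y ≤ 4 * B ^ 2 * E1 * heatKernel (s/2) y :=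
          mul_le_mul_of_nonneg_right hJ2 hp0
        have h2 : 0 ≤ B ^ 2 * E2 * (heatKernel (s/2) (y - r/4) + heatKernel (s/2) (y + r/4)) :=
          mul_nonneg (by positivity) (add_nonneg hp1 hp2)
        linarith
      · -- far: use J_bound and shift of the heat kernel
        push_neg at hy
        have hJB := J_bound hu hB0 hbd (x - y)
        rw [← hJ] at hJB
        have hJ2 : J ^ 2 ≤ B ^ 2 := by
          rcases abs_le.mp hJB with ⟨hl, hr'⟩
          nlinarith
        have hshift := hk_shift hs2 (by linarith : (0:ℝ) ≤ r/4) hy.le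
        have e3 : -(r/4) ^ 2 / (2 * (s/2)) = -r ^ 2 / (16 * s) := by
          field_simp
          norm_num
        rw [e3, ← hE2] at hshift
        have h2 : J ^ 2 * heatKernel (s/2) y
            ≤ B ^ 2 * (E2 * (heatKernel (s/2) (y - r/4) + heatKernel (s/2) (y + r/4))) :=
          mul_le_mul hJ2 hshift hp0 (sq_nonneg B)
        have h3 : 0 ≤ 4 * B ^ 2 * E1 * heatKernel (s/2) y :=
          mul_nonneg (by positivity) hp0
        nlinarith
    have hmono := MeasureTheory.integral_mono_of_nonneg
      (Filter.Eventually.of_forall hnonneg) hint (Filter.Eventually.of_forall hptwise)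
    have hcalc : (∫ y : ℝ, 4 * B ^ 2 * E1 * heatKernel (s/2) y
        + B ^ 2 * E2 * (heatKernel (s/2) (y - r/4) + heatKernel (s/2) (y + r/4)))
        = 4 * B ^ 2 * E1 + 2 * B ^ 2 * E2 := by
      have hint1 : Integrable (fun y => 4 * B ^ 2 * E1 * heatKernel (s/2) y) :=
        (hk_integrable hs2).const_mul _
      have hintb : Integrable (fun y : ℝ =>
          heatKernel (s/2) (y - r/4) + heatKernel (s/2) (y + r/4)) := by
        refine ((hk_integrable hs2).comp_sub_right (r/4)).add ?_
        have h2 := (hk_integrable hs2).comp_sub_right (-(r/4))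
        simpa [sub_neg_eq_add] using h2
      have hint2 : Integrable (fun y : ℝ => B ^ 2 * E2 *
          (heatKernel (s/2) (y - r/4) + heatKernel (s/2) (y + r/4))) :=
        hintb.const_mul _
      rw [MeasureTheory.integral_add hint1 hint2, MeasureTheory.integral_const_mul,
        MeasureTheory.integral_const_mul, hk_integral hs2]
      have hI1 : (∫ y : ℝ, heatKernel (s/2) (y - r/4)) = 1 := by
        rw [MeasureTheory.integral_sub_right_eq_self (heatKernel (s/2)) (r/4),
          hk_integral hs2]
      have hI2 : (∫ y : ℝ, heatKernel (s/2) (y + r/4)) = 1 := by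
        have h := MeasureTheory.integral_sub_right_eq_self (μ := volume)
          (heatKernel (s/2)) (-(r/4))
        rw [hk_integral hs2] at h
        simpa [sub_neg_eq_add] using h
      have hint3 : Integrable (fun y : ℝ => heatKernel (s/2) (y + r/4)) := by
        have h2 := (hk_integrable hs2).comp_sub_right (-(r/4))
        simpa [sub_neg_eq_add] using h2
      rw [MeasureTheory.integral_add ((hk_integrable hs2).comp_sub_right (r/4)) hint3,
        hI1, hI2]
      ring
    rw [hcalc] at hmono
    exact hmono
  · -- second inequality
    have he1 : E1 ≤ Real.exp (-r ^ 2 / (16 * t)) := by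
      rw [hE1]
      have e4 : -r ^ 2 / (4 * t) = -(r ^ 2) / (4 * t) := by ring
      have e5 : -r ^ 2 / (16 * t) = -(r ^ 2) / (16 * t) := by ring
      rw [e4, e5]
      exact exp_div_mono (sq_nonneg r) (by linarith) (by linarith)
    have he2 : E2 ≤ Real.exp (-r ^ 2 / (16 * t)) := by
      rw [hE2]
      have e4 : -r ^ 2 / (16 * s) = -(r ^ 2) / (16 * s) := by ring
      have e5 : -r ^ 2 / (16 * t) = -(r ^ 2) / (16 * t) := by ring
      rw [e4, e5]
      exact exp_div_mono (sq_nonneg r) (by linarith) (by linarith)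
    nlinarith [sq_nonneg B]
end
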